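/- Let u(z) = z(1 + Σ_{n≥1} u_n z^n) be a formal power series with compositional inverse U(t) = t(1 + Σ_{n≥1} U_n t^n), and define P_n(u) := Res( (U'(t)/U(t))² t^{-n+1}, t = 0 ) for n ≥ 1. Then P_n is a polynomial in u_1, …, u_n with integer coefficients, homogeneous of degree n when u_j is assigned degree j, and P_n = -2n·u_n + (terms involving only u_1, …, u_{n-1}). -/

import Mathlib

open PowerSeries

noncomputable section

/-- Composition `f ∘ g` of formal power series (meaningful when `g` has zero constant term). -/
def psComp (f g : PowerSeries ℂ) : PowerSeries ℂ :=
  PowerSeries.mk fun n => ∑ k ∈ Finset.range (n + 1),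
    PowerSeries.coeff k f * PowerSeries.coeff n (g ^ k)

/-- Inclusion of power series into the Laurent series field `ℂ((t))`. -/
def toLS (f : PowerSeries ℂ) : LaurentSeries ℂ := HahnSeries.ofPowerSeries ℤ ℂ f

/-- The variable `t` of the Laurent series field. -/
def tLS : LaurentSeries ℂ := toLS PowerSeries.X

/-- The formal power series `u(z) = z(1 + Σ_{n≥1} c n · zⁿ)`. -/
def uSeries (c : ℕ → ℂ) : PowerSeries ℂ :=
  PowerSeries.mk fun k => if k = 0 then 0 else if k = 1 then 1 else c (k - 1)

/-- `P_n(u) = Res( (U'(t)/U(t))² t^{-n+1}, t = 0 )`, where `U` is the compositional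
inverse of `u`; the residue is the coefficient of `t⁻¹` in `ℂ((t))`. -/
def Pres (n : ℕ) (U : PowerSeries ℂ) : ℂ :=
  ((toLS (derivativeFun U) / toLS U) ^ 2 * tLS ^ (1 - (n : ℤ))).coeff (-1)

namespace PnAux

variable {S : Type*} [CommRing S]

/-- If `X ∣ A`, `X ∣ B` and `X^m ∣ A - B` then `X^(m+k) ∣ A^(k+1) - B^(k+1)`. -/
lemma pow_sub_pow_dvd (A B : PowerSeries S) (m : ℕ) (hA : X ∣ A) (hB : X ∣ B)
    (hAB : (X : PowerSeries S) ^ m ∣ A - B) (k : ℕ) :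
    (X : PowerSeries S) ^ (m + k) ∣ A ^ (k + 1) - B ^ (k + 1) := by
  induction k with
  | zero => simpa using hAB
  | succ k ih =>
    have : A ^ (k + 2) - B ^ (k + 2) = A * (A ^ (k + 1) - B ^ (k + 1)) + (A - B) * B ^ (k + 1) := by
      ring
    rw [this]
    refine dvd_add ?_ ?_
    · have : (X : PowerSeries S) ^ (m + (k+1)) = X * X ^ (m + k) := by rw [← pow_succ']; ring_nf
      rw [this]
      exact mul_dvd_mul hA ih
    · have : (X : PowerSeries S) ^ (m + (k+1)) = X ^ m * X ^ (k + 1) := by rw [← pow_add]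
      rw [this]
      exact mul_dvd_mul hAB (pow_dvd_pow_of_dvd hB _)

lemma coeff_pow_congr {A B : PowerSeries S} {m : ℕ} (hA : constantCoeff A = 0)
    (hB : constantCoeff B = 0) (h : ∀ j < m, coeff j A = coeff j B) {k : ℕ} (hk : 2 ≤ k) :
    coeff m (A ^ k) = coeff m (B ^ k) := by
  have hAB : (X : PowerSeries S) ^ m ∣ A - B := by
    rw [X_pow_dvd_iff]
    intro j hj
    simp [map_sub, h j hj]
  obtain ⟨k', rfl⟩ : ∃ k', k = k' + 1 := ⟨k - 1, by omega⟩
  have := pow_sub_pow_dvd A B m (X_dvd_iff.2 hA) (X_dvd_iff.2 hB) hAB k'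
  have h0 : coeff m (A ^ (k' + 1) - B ^ (k' + 1)) = 0 := by
    rw [X_pow_dvd_iff] at this
    exact this m (by omega)
  rw [map_sub, sub_eq_zero] at h0
  exact h0

lemma coeff_pow_zero_of_lt {A : PowerSeries S} (hA : constantCoeff A = 0) {m k : ℕ}
    (hk : m < k) : coeff m (A ^ k) = 0 := by
  have : (X : PowerSeries S) ^ k ∣ A ^ k := pow_dvd_pow_of_dvd (X_dvd_iff.2 hA) k
  rw [X_pow_dvd_iff] at this
  exact this m hk


variable {S : Type*} [CommRing S]

/-- Coefficient recursion satisfied by a compositional inverse. -/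
lemma comp_rec {c : ℕ → S} {A : PowerSeries S}
    (hcomp : ∀ m : ℕ, ∑ k ∈ Finset.range (m + 1),
      (if k = 0 then 0 else if k = 1 then 1 else c (k - 1)) * coeff m (A ^ k)
        = coeff m (X : PowerSeries S))
    {m : ℕ} (hm : 1 ≤ m) :
    coeff m A = (if m = 1 then 1 else 0)
      - ∑ k ∈ Finset.Icc 2 m, c (k - 1) * coeff m (A ^ k) := by
  have h := hcomp m
  have hsplit : Finset.range (m + 1) = insert 0 (insert 1 (Finset.Icc 2 m)) := by
    ext j; simp [Finset.mem_range, Finset.mem_insert, Finset.mem_Icc]; omega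
  rw [hsplit, Finset.sum_insert (by simp), Finset.sum_insert (by simp)] at h
  norm_num at h
  have hX : coeff m (X : PowerSeries S) = if m = 1 then 1 else 0 := by
    simp [coeff_X]
  rw [hX] at h
  have : ∑ k ∈ Finset.Icc 2 m, (if k = 0 then (0:S) else if k = 1 then coeff m (A ^ k) else c (k - 1) * coeff m (A ^ k))
      = ∑ k ∈ Finset.Icc 2 m, c (k - 1) * coeff m (A ^ k) := by
    refine Finset.sum_congr rfl fun k hk => ?_
    rw [Finset.mem_Icc] at hk
    rw [if_neg (by omega), if_neg (by omega)]
  rw [this] at h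
  linear_combination h


/-- Variables: `XR n j` stands for `c (j+1)`. -/
def XR (n j : ℕ) : MvPolynomial (Fin n) ℤ :=
  if h : j < n then MvPolynomial.X ⟨j, h⟩ else 0

/-- Universal coefficients of the compositional inverse: `Ucoef n m` represents
the coefficient of `t^m` of `U`. -/
def Ucoef (n : ℕ) : ℕ → MvPolynomial (Fin n) ℤ
  | 0 => 0
  | 1 => 1
  | m + 2 =>
    -∑ k ∈ Finset.Icc 2 (m + 2), XR n (k - 2) *
      PowerSeries.coeff (m + 2)
        ((PowerSeries.mk fun j => if h : j < m + 2 then Ucoef n j else 0) ^ k)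
  termination_by m => m
  decreasing_by exact h

lemma Ucoef_zero (n : ℕ) : Ucoef n 0 = 0 := by rw [Ucoef]
lemma Ucoef_one (n : ℕ) : Ucoef n 1 = 1 := by rw [Ucoef]
lemma Ucoef_add_two (n m : ℕ) : Ucoef n (m + 2) =
    -∑ k ∈ Finset.Icc 2 (m + 2), XR n (k - 2) *
      PowerSeries.coeff (m + 2)
        ((PowerSeries.mk fun j => if h : j < m + 2 then Ucoef n j else 0) ^ k) := by
  rw [Ucoef]


lemma Ucoef_spec {S : Type*} [CommRing S] (n : ℕ) (c : ℕ → S) (A : PowerSeries S)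
    (hU0 : constantCoeff A = 0)
    (hcomp : ∀ m : ℕ, ∑ k ∈ Finset.range (m + 1),
      (if k = 0 then 0 else if k = 1 then 1 else c (k - 1)) * coeff m (A ^ k)
        = coeff m (X : PowerSeries S)) :
    ∀ m, m ≤ n + 1 →
      coeff m A = MvPolynomial.aeval (fun j : Fin n => c ((j : ℕ) + 1)) (Ucoef n m) := by
  intro m
  induction m using Nat.strong_induction_on with
  | _ m ih =>
    intro hm
    match m, hm, ih with
    | 0, hm, ih =>
      rw [Ucoef_zero, map_zero, coeff_zero_eq_constantCoeff, hU0]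
    | 1, hm, ih =>
      have h := comp_rec hcomp (le_refl 1)
      simp only [if_pos rfl, Finset.Icc_self] at h
      rw [Ucoef_one, map_one]
      rw [h]
      norm_num
    | m + 2, hm, ih =>
      have h := comp_rec hcomp (m := m + 2) (by omega)
      rw [if_neg (by omega), zero_sub] at h
      rw [Ucoef_add_two]
      set s : Fin n → S := fun j => c ((j : ℕ) + 1) with hs
      set T : PowerSeries (MvPolynomial (Fin n) ℤ) :=
        PowerSeries.mk fun j => if h : j < m + 2 then Ucoef n j else 0 with hT
      have hmapT : PowerSeries.map (MvPolynomial.aeval s).toRingHom T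
          = PowerSeries.mk (fun j => if j < m + 2 then coeff j A else 0) := by
        ext j
        simp only [coeff_map, coeff_mk, hT]
        by_cases hj : j < m + 2
        · rw [dif_pos hj, if_pos hj]
          exact (ih j hj (by omega)).symm
        · rw [dif_neg hj, if_neg hj, map_zero]
      rw [map_neg, map_sum, h]
      congr 1
      refine Finset.sum_congr rfl fun k hk => ?_
      rw [Finset.mem_Icc] at hk
      rw [map_mul]
      congr 1
      · rw [XR, dif_pos (show k - 2 < n by omega)]
        rw [MvPolynomial.aeval_X]
        show c (k - 1) = c ((k - 2) + 1)
        congr 1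
        omega
      · have h1 : MvPolynomial.aeval s (coeff (m + 2) (T ^ k))
            = coeff (m + 2) ((PowerSeries.map (MvPolynomial.aeval s).toRingHom T) ^ k) := by
          rw [← map_pow, coeff_map]
          rfl
        rw [h1, hmapT]
        symm
        have hk2 : 2 ≤ k := hk.1
        refine coeff_pow_congr ?_ hU0 ?_ hk2
        · show constantCoeff (PowerSeries.mk fun j => if j < m + 2 then coeff j A else 0) = 0
          rw [← coeff_zero_eq_constantCoeff_apply, coeff_mk, if_pos (by omega),
            coeff_zero_eq_constantCoeff_apply, hU0]
        · intro j hj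
          rw [coeff_mk, if_pos hj]

/-- Integer weights: variable `j` ↦ `j+1`. -/
def wZ (n : ℕ) : Fin n → ℤ := fun j => (j : ℕ) + 1

/-- Graded series with shift `s`: the `j`-th coefficient is weighted homogeneous of degree `j+s`. -/
def Gr (n : ℕ) (s : ℤ) (A : PowerSeries (MvPolynomial (Fin n) ℤ)) : Prop :=
  ∀ j : ℕ, MvPolynomial.IsWeightedHomogeneous (wZ n) (coeff j A) ((j : ℤ) + s)

lemma hom_neg {n : ℕ} {p : MvPolynomial (Fin n) ℤ} {d : ℤ}
    (h : p.IsWeightedHomogeneous (wZ n) d) : (-p).IsWeightedHomogeneous (wZ n) d := by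
  rw [← MvPolynomial.mem_weightedHomogeneousSubmodule] at h ⊢
  exact Submodule.neg_mem _ h

lemma Gr.mul {n : ℕ} {s t : ℤ} {A B : PowerSeries (MvPolynomial (Fin n) ℤ)}
    (hA : Gr n s A) (hB : Gr n t B) : Gr n (s + t) (A * B) := by
  intro j
  rw [coeff_mul]
  refine MvPolynomial.IsWeightedHomogeneous.sum _ _ _ fun p hp => ?_
  have hpj : p.1 + p.2 = j := Finset.HasAntidiagonal.mem_antidiagonal.1 hp
  have h := (hA p.1).mul (hB p.2)
  have hd : ((p.1 : ℤ) + s) + ((p.2 : ℤ) + t) = (j : ℤ) + (s + t) := by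
    have : ((p.1 : ℤ)) + p.2 = j := by exact_mod_cast congrArg (Nat.cast : ℕ → ℤ) hpj
    linarith
  rwa [hd] at h

lemma Gr.one {n : ℕ} : Gr n 0 (1 : PowerSeries (MvPolynomial (Fin n) ℤ)) := by
  intro j
  rw [coeff_one]
  by_cases hj : j = 0
  · subst hj
    simpa using MvPolynomial.isWeightedHomogeneous_one ℤ (wZ n)
  · rw [if_neg hj]
    exact MvPolynomial.isWeightedHomogeneous_zero ℤ _ _

lemma Gr.pow {n : ℕ} {A : PowerSeries (MvPolynomial (Fin n) ℤ)} (hA : Gr n (-1) A) :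
    ∀ k : ℕ, Gr n (-(k : ℤ)) (A ^ k) := by
  intro k
  induction k with
  | zero => simpa using Gr.one
  | succ k ih =>
    rw [pow_succ, show (-((k + 1 : ℕ) : ℤ)) = -(k : ℤ) + -1 by push_cast; ring]
    exact ih.mul hA

lemma Ucoef_hom (n : ℕ) : ∀ m : ℕ,
    (Ucoef n m).IsWeightedHomogeneous (wZ n) ((m : ℤ) - 1) := by
  intro m
  induction m using Nat.strong_induction_on with
  | _ m ih =>
    match m with
    | 0 =>
      rw [Ucoef_zero]
      exact MvPolynomial.isWeightedHomogeneous_zero ℤ _ _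
    | 1 =>
      rw [Ucoef_one]
      simpa using MvPolynomial.isWeightedHomogeneous_one ℤ (wZ n)
    | m + 2 =>
      rw [Ucoef_add_two]
      refine hom_neg (MvPolynomial.IsWeightedHomogeneous.sum _ _ _ fun k hk => ?_)
      rw [Finset.mem_Icc] at hk
      have hT : Gr n (-1) (PowerSeries.mk fun j => if h : j < m + 2 then Ucoef n j else 0) := by
        intro j
        rw [coeff_mk]
        by_cases hj : j < m + 2
        · rw [dif_pos hj]
          have := ih j hj
          rwa [show ((j : ℤ) - 1) = (j : ℤ) + (-1) by ring] at this
        · rw [dif_neg hj]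
          exact MvPolynomial.isWeightedHomogeneous_zero ℤ _ _
      have h2 := hT.pow k ((m + 2 : ℕ))
      have h1 : (XR n (k - 2)).IsWeightedHomogeneous (wZ n) ((k : ℤ) - 1) := by
        rw [XR]
        by_cases h : k - 2 < n
        · rw [dif_pos h]
          have := MvPolynomial.isWeightedHomogeneous_X ℤ (wZ n) (⟨k - 2, h⟩ : Fin n)
          have hw : wZ n ⟨k - 2, h⟩ = (k : ℤ) - 1 := by
            simp only [wZ]
            have : ((k - 2 : ℕ) : ℤ) = (k : ℤ) - 2 := by omega
            rw [this]; ring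
          rwa [hw] at this
        · rw [dif_neg h]
          exact MvPolynomial.isWeightedHomogeneous_zero ℤ _ _
      have := h1.mul h2
      rwa [show ((k : ℤ) - 1) + (((m + 2 : ℕ) : ℤ) + (-(k : ℤ))) = ((m + 2 : ℕ) : ℤ) - 1 by
        push_cast; ring] at this

/-- universal `U/t`. -/
def WUu (n : ℕ) : PowerSeries (MvPolynomial (Fin n) ℤ) :=
  PowerSeries.mk fun j => Ucoef n (j + 1)

/-- universal `U'`. -/
def dUu (n : ℕ) : PowerSeries (MvPolynomial (Fin n) ℤ) :=
  PowerSeries.mk fun j => Ucoef n (j + 1) * ((j + 1 : ℕ) : MvPolynomial (Fin n) ℤ)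

/-- universal `(U/t)⁻¹`. -/
def Winvu (n : ℕ) : PowerSeries (MvPolynomial (Fin n) ℤ) := invOfUnit (WUu n) 1

/-- universal `U' · (U/t)⁻¹`. -/
def Gu (n : ℕ) : PowerSeries (MvPolynomial (Fin n) ℤ) := dUu n * Winvu n

/-- The polynomial `P_n`. -/
def Qpoly (n : ℕ) : MvPolynomial (Fin n) ℤ := coeff n (Gu n ^ 2)

lemma Gr_WUu (n : ℕ) : Gr n 0 (WUu n) := by
  intro j
  rw [WUu, coeff_mk]
  have := Ucoef_hom n (j + 1)
  rwa [show (((j + 1 : ℕ)) : ℤ) - 1 = (j : ℤ) + 0 by push_cast; ring] at this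

lemma Gr_dUu (n : ℕ) : Gr n 0 (dUu n) := by
  intro j
  rw [dUu, coeff_mk]
  have h1 := Ucoef_hom n (j + 1)
  have h2 : (((j + 1 : ℕ) : MvPolynomial (Fin n) ℤ)).IsWeightedHomogeneous (wZ n) 0 := by
    have : ((j + 1 : ℕ) : MvPolynomial (Fin n) ℤ) = MvPolynomial.C ((j + 1 : ℕ) : ℤ) := by
      simp
    rw [this]
    exact MvPolynomial.isWeightedHomogeneous_C _ _
  have := h1.mul h2
  rwa [show (((j + 1 : ℕ) : ℤ) - 1) + 0 = (j : ℤ) + 0 by push_cast; ring] at this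

lemma Gr_Winvu (n : ℕ) : Gr n 0 (Winvu n) := by
  intro j
  induction j using Nat.strong_induction_on with
  | _ j ih =>
    rw [Winvu, coeff_invOfUnit]
    by_cases hj : j = 0
    · subst hj
      simpa using MvPolynomial.isWeightedHomogeneous_one ℤ (wZ n)
    · rw [if_neg hj]
      have : (-(((1 : (MvPolynomial (Fin n) ℤ)ˣ)⁻¹ : (MvPolynomial (Fin n) ℤ)ˣ) : MvPolynomial (Fin n) ℤ))
          = MvPolynomial.C (-1 : ℤ) := by simp
      rw [this]
      have hsum : (∑ x ∈ Finset.HasAntidiagonal.antidiagonal j,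
          if x.2 < j then coeff x.1 (WUu n) * coeff x.2 (invOfUnit (WUu n) 1) else 0).IsWeightedHomogeneous (wZ n) ((j : ℤ) + 0) := by
        refine MvPolynomial.IsWeightedHomogeneous.sum _ _ _ fun p hp => ?_
        have hpj : p.1 + p.2 = j := Finset.HasAntidiagonal.mem_antidiagonal.1 hp
        by_cases h2 : p.2 < j
        · rw [if_pos h2]
          have ha := Gr_WUu n p.1
          have hb := ih p.2 h2
          rw [Winvu] at hb
          have := ha.mul hb
          rwa [show ((p.1 : ℤ) + 0) + ((p.2 : ℤ) + 0) = (j : ℤ) + 0 by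
            have : ((p.1 : ℤ)) + p.2 = j := by exact_mod_cast congrArg (Nat.cast : ℕ → ℤ) hpj
            linarith] at this
        · rw [if_neg h2]
          exact MvPolynomial.isWeightedHomogeneous_zero ℤ _ _
      have := (MvPolynomial.isWeightedHomogeneous_C (wZ n) (-1 : ℤ)).mul hsum
      rwa [zero_add] at this

lemma Qpoly_homZ (n : ℕ) : (Qpoly n).IsWeightedHomogeneous (wZ n) ((n : ℤ)) := by
  have hG : Gr n 0 (Gu n) := by
    have := (Gr_dUu n).mul (Gr_Winvu n)
    rwa [zero_add] at this
  have hG2 : Gr n 0 (Gu n ^ 2) := by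
    have := hG.mul hG
    rw [pow_two]
    rwa [zero_add] at this
  have := hG2 n
  rw [add_zero] at this
  exact this

lemma homZ_to_homN {n : ℕ} {p : MvPolynomial (Fin n) ℤ} {d : ℕ}
    (h : p.IsWeightedHomogeneous (wZ n) (d : ℤ)) :
    p.IsWeightedHomogeneous (fun j : Fin n => (j : ℕ) + 1) d := by
  intro e he
  have h1 := h he
  have h2 : ((Finsupp.weight (fun j : Fin n => (j : ℕ) + 1) e : ℕ) : ℤ)
      = Finsupp.weight (wZ n) e := by
    rw [Finsupp.weight_apply, Finsupp.weight_apply, Finsupp.sum, Finsupp.sum]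
    push_cast
    refine Finset.sum_congr rfl fun i _ => ?_
    simp [wZ]
  rw [← h2] at h1
  exact_mod_cast h1

section Eval

variable {S : Type*} [CommRing S] (n : ℕ) (c : ℕ → S) (A : PowerSeries S)

/-- coefficientwise congruence for products. -/
lemma coeff_mul_congr (f : MvPolynomial (Fin n) ℤ →+* S) {m : ℕ}
    {A₁ A₂ : PowerSeries S} {B₁ B₂ : PowerSeries (MvPolynomial (Fin n) ℤ)}
    (h1 : ∀ j ≤ m, coeff j A₁ = f (coeff j B₁))
    (h2 : ∀ j ≤ m, coeff j A₂ = f (coeff j B₂)) :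
    coeff m (A₁ * A₂) = f (coeff m (B₁ * B₂)) := by
  rw [coeff_mul, coeff_mul, map_sum]
  refine Finset.sum_congr rfl fun p hp => ?_
  rw [map_mul, h1 p.1 (Finset.HasAntidiagonal.antidiagonal.fst_le hp), h2 p.2 (Finset.HasAntidiagonal.antidiagonal.snd_le hp)]

variable (hU0 : constantCoeff A = 0)
  (hcomp : ∀ m : ℕ, ∑ k ∈ Finset.range (m + 1),
      (if k = 0 then 0 else if k = 1 then 1 else c (k - 1)) * coeff m (A ^ k)
        = coeff m (X : PowerSeries S))

include hU0 hcomp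

lemma coeff_dU_eval (j : ℕ) (hj : j ≤ n) :
    coeff j (derivativeFun A)
      = MvPolynomial.aeval (fun i : Fin n => c ((i : ℕ) + 1)) (coeff j (dUu n)) := by
  rw [show derivativeFun A = derivative S A from rfl, coeff_derivative, dUu, coeff_mk, map_mul, map_natCast,
    ← Ucoef_spec n c A hU0 hcomp (j + 1) (by omega)]
  push_cast
  ring

lemma coeff_Winv_eval (j : ℕ) (hj : j ≤ n) :
    coeff j (invOfUnit (PowerSeries.mk fun k => coeff (k + 1) A) 1)
      = MvPolynomial.aeval (fun i : Fin n => c ((i : ℕ) + 1)) (coeff j (Winvu n)) := by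
  induction j using Nat.strong_induction_on with
  | _ j ih =>
    rw [Winvu, coeff_invOfUnit, coeff_invOfUnit]
    by_cases hj0 : j = 0
    · subst hj0
      simp
    · rw [if_neg hj0, if_neg hj0, map_mul, map_sum]
      congr 1
      · simp
      · refine Finset.sum_congr rfl fun p hp => ?_
        have hp1 : p.1 ≤ j := Finset.HasAntidiagonal.antidiagonal.fst_le hp
        have hp2 : p.2 ≤ j := Finset.HasAntidiagonal.antidiagonal.snd_le hp
        by_cases h2 : p.2 < j
        · rw [if_pos h2, if_pos h2, map_mul]
          congr 1
          · rw [coeff_mk, WUu, coeff_mk,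
              ← Ucoef_spec n c A hU0 hcomp (p.1 + 1) (by omega)]
          · exact ih p.2 h2 (by omega)
        · rw [if_neg h2, if_neg h2, map_zero]

lemma main_eval :
    coeff n ((derivativeFun A * invOfUnit (PowerSeries.mk fun k => coeff (k + 1) A) 1) ^ 2)
      = MvPolynomial.aeval (fun i : Fin n => c ((i : ℕ) + 1)) (Qpoly n) := by
  have hQ : Qpoly n = coeff n (Gu n ^ 2) := rfl
  rw [hQ, pow_two, pow_two]
  set f := (MvPolynomial.aeval (fun i : Fin n => c ((i : ℕ) + 1)) :
    MvPolynomial (Fin n) ℤ →ₐ[ℤ] S)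
  have hG : ∀ j ≤ n, coeff j (derivativeFun A * invOfUnit (PowerSeries.mk fun k => coeff (k + 1) A) 1)
      = f.toRingHom (coeff j (Gu n)) := by
    intro j hj
    rw [Gu]
    exact coeff_mul_congr n f.toRingHom
      (fun i hi => coeff_dU_eval n c A hU0 hcomp i (le_trans hi hj))
      (fun i hi => coeff_Winv_eval n c A hU0 hcomp i (le_trans hi hj))
  exact coeff_mul_congr n f.toRingHom hG hG

end Eval

lemma tLS_eq : tLS = HahnSeries.single (1 : ℤ) (1 : ℂ) := by
  rw [tLS, toLS, HahnSeries.ofPowerSeries_X]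

lemma tLS_inv : tLS⁻¹ = HahnSeries.single (-1 : ℤ) (1 : ℂ) := by
  refine inv_eq_of_mul_eq_one_right ?_
  rw [tLS_eq, HahnSeries.single_mul_single]
  norm_num [HahnSeries.single_zero_one]

lemma tLS_zpow (z : ℤ) : tLS ^ z = HahnSeries.single z (1 : ℂ) := by
  match z with
  | Int.ofNat k =>
    rw [Int.ofNat_eq_natCast, zpow_natCast, tLS_eq, HahnSeries.single_pow]
    norm_num
  | Int.negSucc k =>
    rw [zpow_negSucc, tLS_eq, HahnSeries.single_pow]
    refine inv_eq_of_mul_eq_one_right ?_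
    rw [HahnSeries.single_mul_single]
    have h : ((k + 1) • (1 : ℤ)) + Int.negSucc k = 0 := by
      rw [nsmul_eq_mul, Int.negSucc_eq]
      push_cast
      ring
    rw [h]
    norm_num [HahnSeries.single_zero_one]

lemma presA (n : ℕ) (U : PowerSeries ℂ) (hU0 : PowerSeries.constantCoeff U = 0)
    (h1 : coeff 1 U = 1) :
    Pres n U = coeff n
      ((derivativeFun U * invOfUnit (PowerSeries.mk fun k => coeff (k + 1) U) 1) ^ 2) := by
  set W : PowerSeries ℂ := PowerSeries.mk fun k => coeff (k + 1) U with hW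
  set V : PowerSeries ℂ := invOfUnit W 1 with hV
  have hW0 : constantCoeff W = 1 := by
    rw [hW, ← coeff_zero_eq_constantCoeff_apply, coeff_mk]
    exact h1
  have hWV : W * V = 1 := mul_invOfUnit W 1 (by rw [hW0, Units.val_one])
  have hXW : U = X * W := by
    ext j
    match j with
    | 0 =>
      rw [coeff_zero_eq_constantCoeff_apply, coeff_zero_eq_constantCoeff_apply, map_mul,
        constantCoeff_X, zero_mul, hU0]
    | j + 1 => rw [coeff_succ_X_mul, hW, coeff_mk]
  have hinvW : (toLS W)⁻¹ = toLS V := by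
    refine inv_eq_of_mul_eq_one_right ?_
    rw [toLS, toLS, ← map_mul, hWV, map_one]
  have hU : toLS U = tLS * toLS W := by
    rw [hXW, toLS, map_mul]
    rfl
  have hdiv : toLS (derivativeFun U) / toLS U
      = toLS (derivativeFun U) * toLS V * tLS⁻¹ := by
    rw [div_eq_mul_inv, hU, mul_inv, hinvW]
    ring
  rw [Pres, hdiv]
  have hF : (toLS (derivativeFun U) * toLS V * tLS⁻¹) ^ 2 * tLS ^ (1 - (n : ℤ))
      = toLS ((derivativeFun U * V) ^ 2) * (tLS⁻¹ ^ 2 * tLS ^ (1 - (n : ℤ))) := by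
    simp only [toLS]
    rw [map_pow, map_mul]
    ring
  rw [hF]
  have hsingle : tLS⁻¹ ^ 2 * tLS ^ (1 - (n : ℤ)) = HahnSeries.single (-1 - (n : ℤ)) (1 : ℂ) := by
    rw [tLS_inv, tLS_zpow, HahnSeries.single_pow, HahnSeries.single_mul_single, one_pow, one_mul]
    congr 1
    simp
    ring
  rw [hsingle]
  have hcoeff : (toLS ((derivativeFun U * V) ^ 2) * HahnSeries.single (-1 - (n : ℤ)) (1 : ℂ)).coeff (-1)
      = (toLS ((derivativeFun U * V) ^ 2)).coeff ((n : ℤ)) * 1 := by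
    have := HahnSeries.coeff_mul_single_add (r := (1 : ℂ))
      (x := toLS ((derivativeFun U * V) ^ 2)) (a := (n : ℤ)) (b := -1 - (n : ℤ))
    rw [show ((n : ℤ) + (-1 - (n : ℤ))) = -1 by ring] at this
    exact this
  rw [hcoeff, mul_one, toLS]
  exact HahnSeries.ofPowerSeries_apply_coeff _ n

/-- Binomial for square-zero second term. -/
lemma sq_zero_binomial {S : Type*} [CommRing S] (x y : PowerSeries S) (h : y * y = 0) :
    ∀ m : ℕ, (x + y) ^ (m + 1) = x ^ (m + 1) + ((m + 1 : ℕ) : PowerSeries S) * (x ^ m * y) := by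
  intro m
  induction m with
  | zero => push_cast; ring
  | succ m ih =>
    have : (x + y) ^ (m + 2) = ((x ^ (m + 1) + ((m + 1 : ℕ) : PowerSeries S) * (x ^ m * y)) * (x + y)) := by
      rw [pow_succ, ih]
    rw [this]
    push_cast
    linear_combination (((m : PowerSeries S) + 1) * x ^ m) * h

section Dual

variable (n : ℕ) (hn : 1 ≤ n)

local notation "S" => DualNumber ℤ

/-- The test series `A = X - ε X^(n+1)`. -/
def Atest (n : ℕ) : PowerSeries S :=
  X - PowerSeries.C (DualNumber.eps : S) * X ^ (n + 1)

lemma eps_sq : (PowerSeries.C (DualNumber.eps : S)) * (PowerSeries.C (DualNumber.eps : S)) = 0 := by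
  rw [← map_mul, DualNumber.eps_mul_eps, map_zero]

lemma coeff_Atest (j : ℕ) : coeff j (Atest n)
    = (if j = 1 then 1 else 0) - (if j = n + 1 then DualNumber.eps else 0) := by
  rw [Atest, map_sub, coeff_X, coeff_C_mul, coeff_X_pow]
  by_cases h : j = n + 1 <;> simp [h]

lemma Atest_const : constantCoeff (Atest n) = 0 := by
  rw [← coeff_zero_eq_constantCoeff_apply, coeff_Atest]
  norm_num

include hn

lemma Atest_pow : (Atest n) ^ (n + 1)
    = X ^ (n + 1) - ((n + 1 : ℕ) : PowerSeries S) * (X ^ n * (PowerSeries.C (DualNumber.eps : S) * X ^ (n + 1))) := by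
  have h : (-(PowerSeries.C (DualNumber.eps : S) * X ^ (n + 1))) * (-(PowerSeries.C (DualNumber.eps : S) * X ^ (n + 1))) = 0 := by
    have := eps_sq
    linear_combination (X ^ (2 * (n + 1))) * this
  have hb := sq_zero_binomial X (-(PowerSeries.C (DualNumber.eps : S) * X ^ (n + 1))) h n
  rw [show Atest n = X + -(PowerSeries.C (DualNumber.eps : S) * X ^ (n + 1)) by rw [Atest]; ring, hb]
  ring

lemma Atest_comp : ∀ m : ℕ, ∑ k ∈ Finset.range (m + 1),
    (if k = 0 then 0 else if k = 1 then 1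
      else (if (k - 1) = n then DualNumber.eps else 0)) * coeff m ((Atest n) ^ k)
    = coeff m (X : PowerSeries S) := by
  have hkey : Atest n + PowerSeries.C (DualNumber.eps : S) * (Atest n) ^ (n + 1) = X := by
    rw [Atest_pow n hn, Atest]
    have := eps_sq
    linear_combination (-(((n + 1 : ℕ) : PowerSeries S)) * X ^ (2 * n + 1)) * this
  intro m
  have hterm : ∀ k, (if k = 0 then (0 : S) else if k = 1 then 1
      else (if (k - 1) = n then DualNumber.eps else 0)) * coeff m ((Atest n) ^ k)
      = (if k = 1 then coeff m (Atest n) else 0)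
        + (if k = n + 1 then DualNumber.eps * coeff m ((Atest n) ^ (n + 1)) else 0) := by
    intro k
    match k with
    | 0 =>
      rw [if_pos rfl, zero_mul, if_neg (by omega : ¬(0 = 1)), if_neg (by omega : ¬(0 = n + 1)),
        add_zero]
    | 1 =>
      rw [if_neg (by omega : ¬(1 = 0)), if_pos rfl, if_pos rfl,
        if_neg (by omega : ¬(1 = n + 1)), pow_one, one_mul, add_zero]
    | k + 2 =>
      rw [if_neg (by omega : ¬(k + 2 = 0)), if_neg (by omega : ¬(k + 2 = 1)),
        if_neg (by omega : ¬(k + 2 = 1)), zero_add]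
      by_cases h : k + 2 = n + 1
      · rw [if_pos (by omega : k + 2 - 1 = n), if_pos h, h]
      · rw [if_neg (by omega : ¬(k + 2 - 1 = n)), if_neg h, zero_mul]
  rw [Finset.sum_congr rfl (fun k _ => hterm k), Finset.sum_add_distrib,
    Finset.sum_ite_eq' (Finset.range (m + 1)) 1 (fun _ => coeff m (Atest n)),
    Finset.sum_ite_eq' (Finset.range (m + 1)) (n + 1)
      (fun _ => DualNumber.eps * coeff m ((Atest n) ^ (n + 1)))]
  have hXc : coeff m (X : PowerSeries S)
      = coeff m (Atest n) + DualNumber.eps * coeff m ((Atest n) ^ (n + 1)) := by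
    conv_lhs => rw [← hkey]
    rw [map_add, coeff_C_mul]
  rw [hXc]
  congr 1
  · by_cases h : 1 ∈ Finset.range (m + 1)
    · rw [if_pos h]
    · rw [if_neg h]
      have hm : m = 0 := by simp at h; omega
      subst hm
      rw [coeff_Atest]
      norm_num
  · by_cases h : n + 1 ∈ Finset.range (m + 1)
    · rw [if_pos h]
    · rw [if_neg h]
      have hm : m < n + 1 := by simp at h; omega
      rw [coeff_pow_zero_of_lt (Atest_const n) hm, mul_zero]

end Dual

section Dual2

variable (n : ℕ) (hn : 1 ≤ n)

local notation "S" => DualNumber ℤ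
local notation "ε" => DualNumber.eps

include hn

lemma eps_xpow_sq :
    ((PowerSeries.C (ε : S)) * X ^ n) * ((PowerSeries.C (ε : S)) * X ^ n) = 0 := by
  have := eps_sq
  linear_combination (X ^ (2 * n)) * this

lemma WA_eq : (PowerSeries.mk fun k => coeff (k + 1) (Atest n))
    = 1 - PowerSeries.C (ε : S) * X ^ n := by
  refine PowerSeries.ext fun k => ?_
  rw [coeff_mk, coeff_Atest, map_sub, coeff_one, coeff_C_mul, coeff_X_pow]
  by_cases hk0 : k = 0
  · subst hk0
    rw [if_pos (by omega : 0 + 1 = 1), if_pos rfl, if_neg (by omega : ¬(0 + 1 = n + 1)),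
      if_neg (by omega : ¬(0 = n)), mul_zero]
  · rw [if_neg (by omega : ¬(k + 1 = 1)), if_neg hk0]
    by_cases hkn : k = n
    · subst hkn
      rw [if_pos rfl, if_pos rfl, mul_one]
    · rw [if_neg (by omega : ¬(k + 1 = n + 1)), if_neg hkn, mul_zero]

lemma dA_eq : derivativeFun (Atest n)
    = 1 - ((n + 1 : ℕ) : PowerSeries S) * (PowerSeries.C (ε : S) * X ^ n) := by
  refine PowerSeries.ext fun j => ?_
  rw [show derivativeFun (Atest n) = derivative S (Atest n) from rfl, coeff_derivative, coeff_Atest, map_sub, coeff_one,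
    show ((n + 1 : ℕ) : PowerSeries S) = PowerSeries.C ((n + 1 : ℕ) : S) by
      rw [map_natCast],
    coeff_C_mul, coeff_C_mul, coeff_X_pow]
  by_cases hj0 : j = 0
  · subst hj0
    rw [if_pos (by omega : 0 + 1 = 1), if_pos rfl, if_neg (by omega : ¬(0 + 1 = n + 1)),
      if_neg (by omega : ¬(0 = n)), mul_zero, mul_zero, sub_zero]
    norm_num
  · rw [if_neg (by omega : ¬(j + 1 = 1)), if_neg hj0]
    by_cases hjn : j = n
    · subst hjn
      rw [if_pos rfl, if_pos rfl, mul_one]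
      push_cast
      ring
    · rw [if_neg (by omega : ¬(j + 1 = n + 1)), if_neg hjn, mul_zero, mul_zero, sub_zero]
      ring

lemma VA_eq : invOfUnit (PowerSeries.mk fun k => coeff (k + 1) (Atest n)) 1
    = 1 + PowerSeries.C (ε : S) * X ^ n := by
  rw [WA_eq n hn]
  set W : PowerSeries S := 1 - PowerSeries.C (ε : S) * X ^ n with hW
  have hW0 : constantCoeff W = 1 := by
    rw [hW, map_sub, map_one, map_mul, constantCoeff_C]
    have : constantCoeff (X ^ n : PowerSeries S) = 0 := by
      rw [← coeff_zero_eq_constantCoeff_apply, coeff_X_pow, if_neg (by omega)]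
    rw [this, mul_zero, sub_zero]
  have h1 : W * invOfUnit W 1 = 1 := mul_invOfUnit W 1 (by rw [hW0, Units.val_one])
  have h2 : W * (1 + PowerSeries.C (ε : S) * X ^ n) = 1 := by
    rw [hW]
    have := eps_xpow_sq n hn
    linear_combination -this
  calc invOfUnit W 1 = invOfUnit W 1 * (W * (1 + PowerSeries.C (ε : S) * X ^ n)) := by
        rw [h2, mul_one]
    _ = (W * invOfUnit W 1) * (1 + PowerSeries.C (ε : S) * X ^ n) := by ring
    _ = 1 + PowerSeries.C (ε : S) * X ^ n := by rw [h1, one_mul]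

lemma G_sq_eq :
    (derivativeFun (Atest n) * invOfUnit (PowerSeries.mk fun k => coeff (k + 1) (Atest n)) 1) ^ 2
      = 1 - ((2 * n : ℕ) : PowerSeries S) * (PowerSeries.C (ε : S) * X ^ n) := by
  rw [dA_eq n hn, VA_eq n hn]
  have ha := eps_xpow_sq n hn
  have hG : (1 - ((n + 1 : ℕ) : PowerSeries S) * (PowerSeries.C (ε : S) * X ^ n))
      * (1 + PowerSeries.C (ε : S) * X ^ n)
      = 1 - ((n : ℕ) : PowerSeries S) * (PowerSeries.C (ε : S) * X ^ n) := by
    push_cast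
    linear_combination (-((n : PowerSeries S) + 1)) * ha
  rw [pow_two, hG]
  push_cast
  linear_combination ((n : PowerSeries S) ^ 2) * ha

lemma coeff_n_G_sq :
    coeff n ((derivativeFun (Atest n)
      * invOfUnit (PowerSeries.mk fun k => coeff (k + 1) (Atest n)) 1) ^ 2)
      = -(((2 * n : ℕ) : S) * ε) := by
  rw [G_sq_eq n hn, map_sub, coeff_one, if_neg (by omega),
    show ((2 * n : ℕ) : PowerSeries S) = PowerSeries.C ((2 * n : ℕ) : S) by rw [map_natCast],
    coeff_C_mul, coeff_C_mul, coeff_X_pow, if_pos rfl]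
  ring

/-- Evaluation of `Qpoly` at the dual-number point. -/
lemma Qpoly_dual_eval :
    MvPolynomial.aeval (fun i : Fin n =>
        (if ((i : ℕ) + 1) = n then ε else 0 : S)) (Qpoly n)
      = -(((2 * n : ℕ) : S) * ε) := by
  have hcomp := Atest_comp n hn
  have hmain := main_eval n (fun k => if k = n then (ε : S) else 0) (Atest n)
    (Atest_const n) hcomp
  rw [← coeff_n_G_sq n hn]
  exact hmain.symm

end Dual2

section Final

variable (n : ℕ) (hn : 1 ≤ n)

local notation "S" => DualNumber ℤ
local notation "ε" => DualNumber.eps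

lemma weight_single_analysis (hn : 1 ≤ n) (d : Fin n →₀ ℕ)
    (hw : Finsupp.weight (fun j : Fin n => (j : ℕ) + 1) d = n)
    (hmem : (⟨n - 1, Nat.sub_lt hn one_pos⟩ : Fin n) ∈ d.support) :
    d = Finsupp.single (⟨n - 1, Nat.sub_lt hn one_pos⟩ : Fin n) 1 := by
  set j0 : Fin n := ⟨n - 1, Nat.sub_lt hn one_pos⟩ with hj0
  have hval : ((j0 : ℕ)) + 1 = n := by
    simp only [hj0]
    omega
  rw [Finsupp.weight_apply, Finsupp.sum, Finset.sum_eq_add_sum_sdiff_singleton_of_mem hmem] at hw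
  have hpos : 1 ≤ d j0 := Nat.pos_of_ne_zero (Finsupp.mem_support_iff.1 hmem)
  rw [smul_eq_mul, hval] at hw
  set r := ∑ i ∈ d.support \ {j0}, d i • ((i : ℕ) + 1) with hr
  have hle : n ≤ d j0 * n := Nat.le_mul_of_pos_left n hpos
  have h1 : d j0 * n = n ∧ r = 0 := by
    set t := d j0 * n
    omega
  have hd1 : d j0 = 1 := by
    have := h1.1
    have hn0 : 0 < n := hn
    have : d j0 * n = 1 * n := by rw [h1.1, one_mul]
    exact Nat.eq_of_mul_eq_mul_right hn0 this
  have hempty : d.support \ {j0} = ∅ := by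
    by_contra hne
    obtain ⟨i, hi⟩ := Finset.nonempty_of_ne_empty hne
    have hterm := (Finset.sum_eq_zero_iff.1 h1.2) i hi
    have hi2 : d i ≠ 0 := Finsupp.mem_support_iff.1 (Finset.mem_sdiff.1 hi).1
    rw [smul_eq_mul] at hterm
    rcases Nat.mul_eq_zero.1 hterm with h | h
    · exact hi2 h
    · omega
  have hsub : d.support ⊆ {j0} := by
    intro i hi
    by_contra hni
    have : i ∈ d.support \ {j0} := Finset.mem_sdiff.2 ⟨hi, hni⟩
    rw [hempty] at this
    exact absurd this (Finset.notMem_empty i)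
  have := Finsupp.support_subset_singleton.1 hsub
  rw [hd1] at this
  exact this

lemma lin_coeff :
    MvPolynomial.coeff
      (Finsupp.single (⟨n - 1, Nat.sub_lt hn one_pos⟩ : Fin n) 1) (Qpoly n)
      = -(2 * (n : ℤ)) := by
  set j0 : Fin n := ⟨n - 1, Nat.sub_lt hn one_pos⟩ with hj0
  set L : ℤ := MvPolynomial.coeff (Finsupp.single j0 1) (Qpoly n) with hL
  have homN : (Qpoly n).IsWeightedHomogeneous (fun j : Fin n => (j : ℕ) + 1) n :=
    homZ_to_homN (Qpoly_homZ n)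
  set sfun : Fin n → S := fun i => if ((i : ℕ) + 1) = n then (ε : S) else 0 with hsfun
  have hvj0 : (j0 : ℕ) = n - 1 := by simp only [hj0]
  have hexp : MvPolynomial.aeval sfun (Qpoly n) = algebraMap ℤ S L * ε := by
    conv_lhs => rw [(Qpoly n).as_sum]
    rw [map_sum]
    have h0 : ∀ d ∈ (Qpoly n).support, d ≠ Finsupp.single j0 1 →
        MvPolynomial.aeval sfun (MvPolynomial.monomial d (MvPolynomial.coeff d (Qpoly n))) = 0 := by
      intro d hd hne
      have hw : Finsupp.weight (fun j : Fin n => (j : ℕ) + 1) d = n :=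
        homN (MvPolynomial.mem_support_iff.1 hd)
      by_cases hmem : j0 ∈ d.support
      · exact absurd (weight_single_analysis n hn d hw hmem) hne
      · rw [MvPolynomial.aeval_monomial]
        have hdne : d ≠ 0 := by
          intro h0'
          rw [h0'] at hw
          simp at hw
          omega
        obtain ⟨i, hi⟩ := Finsupp.support_nonempty_iff.2 hdne
        have hine : i ≠ j0 := fun h => hmem (h ▸ hi)
        have hzero : sfun i ^ d i = 0 := by
          have hne2 : ((i : ℕ) + 1) ≠ n := by
            intro hc
            exact hine (Fin.ext (by omega))
          have : sfun i = 0 := by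
            simp only [hsfun]
            rw [if_neg hne2]
          rw [this]
          exact zero_pow (Finsupp.mem_support_iff.1 hi)
        have : (Finsupp.prod d fun i e => sfun i ^ e) = 0 := by
          rw [Finsupp.prod]
          exact Finset.prod_eq_zero hi hzero
        rw [this, mul_zero]
    have h1 : Finsupp.single j0 1 ∉ (Qpoly n).support →
        MvPolynomial.aeval sfun
          (MvPolynomial.monomial (Finsupp.single j0 1)
            (MvPolynomial.coeff (Finsupp.single j0 1) (Qpoly n))) = 0 := by
      intro hnot
      rw [MvPolynomial.notMem_support_iff.1 hnot, map_zero, map_zero]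
    rw [Finset.sum_eq_single (Finsupp.single j0 1) h0 h1, MvPolynomial.aeval_monomial,
      Finsupp.prod_single_index (by rw [pow_zero])]
    have : sfun j0 = ε := by
      simp only [hsfun]
      rw [if_pos (by omega)]
    rw [this, pow_one, ← hL]
  have hs := Qpoly_dual_eval n hn
  rw [hsfun] at hexp
  rw [hexp] at hs
  have hsnd := congrArg TrivSqZeroExt.snd hs
  simp only [algebraMap_int_eq, eq_intCast, DualNumber.snd_mul, TrivSqZeroExt.fst_intCast,
    TrivSqZeroExt.snd_intCast, DualNumber.fst_eps, DualNumber.snd_eps, TrivSqZeroExt.snd_neg,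
    TrivSqZeroExt.fst_natCast, TrivSqZeroExt.snd_natCast, mul_one, mul_zero, add_zero,
    zero_mul, zero_add] at hsnd
  rw [hL] at hsnd ⊢
  push_cast at hsnd ⊢
  linarith

end Final

end PnAux

/-- **(Proposition 3.4, properties of `P_n`.)**  For each `n ≥ 1` there is a polynomial
`Q` with integer coefficients in `u_1, …, u_n` (variable `j : Fin n` standing for
`u_{j+1}`), weighted homogeneous of degree `n` when `u_j` has degree `j`, of the form
`Q = -2n·u_n + (terms involving only u_1, …, u_{n-1})`, such that for every coefficient
sequence `c` and every compositional inverse `U` of `u(z) = z(1 + Σ c_n zⁿ)` one has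
`P_n(u) = Q(u_1, …, u_n)`. -/

theorem Pn_is_integer_polynomial (n : ℕ) (hn : 1 ≤ n) :
    ∃ Q : MvPolynomial (Fin n) ℤ,
      Q.IsWeightedHomogeneous (fun j : Fin n => (j : ℕ) + 1) n ∧
      (∃ Q' : MvPolynomial (Fin n) ℤ,
        (⟨n - 1, Nat.sub_lt hn one_pos⟩ : Fin n) ∉ Q'.vars ∧
        Q = (-(2 * (n : ℤ))) • MvPolynomial.X ⟨n - 1, Nat.sub_lt hn one_pos⟩ + Q') ∧
      ∀ (c : ℕ → ℂ) (U : PowerSeries ℂ),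
        PowerSeries.constantCoeff U = 0 →
        psComp (uSeries c) U = PowerSeries.X →
        Pres n U = MvPolynomial.aeval (fun j : Fin n => c ((j : ℕ) + 1)) Q := by
  classical
  refine ⟨PnAux.Qpoly n, PnAux.homZ_to_homN (PnAux.Qpoly_homZ n), ?_, ?_⟩
  · set j0 : Fin n := ⟨n - 1, Nat.sub_lt hn one_pos⟩ with hj0
    refine ⟨PnAux.Qpoly n - (-(2 * (n : ℤ))) • MvPolynomial.X j0, ?_, ?_⟩
    · intro hmem
      obtain ⟨d, hd, hdmem⟩ := (MvPolynomial.mem_vars j0).1 hmem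
      have hXhom : (MvPolynomial.X j0 : MvPolynomial (Fin n) ℤ).IsWeightedHomogeneous
          (fun j : Fin n => (j : ℕ) + 1) n := by
        have := MvPolynomial.isWeightedHomogeneous_X ℤ (fun j : Fin n => (j : ℕ) + 1) j0
        rwa [show (j0 : ℕ) + 1 = n by simp only [hj0]; omega] at this
      have homQ := PnAux.homZ_to_homN (PnAux.Qpoly_homZ n)
      have hw : Finsupp.weight (fun j : Fin n => (j : ℕ) + 1) d = n := by
        have hcoeff := MvPolynomial.mem_support_iff.1 hd
        rw [MvPolynomial.coeff_sub, MvPolynomial.coeff_smul] at hcoeff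
        by_cases h1 : MvPolynomial.coeff d (PnAux.Qpoly n) ≠ 0
        · exact homQ h1
        · push_neg at h1
          have h2 : MvPolynomial.coeff d (MvPolynomial.X j0 : MvPolynomial (Fin n) ℤ) ≠ 0 := by
            intro h2
            rw [h1, h2] at hcoeff
            simp at hcoeff
          exact hXhom h2
      have hdsingle := PnAux.weight_single_analysis n hn d hw hdmem
      have hzero : MvPolynomial.coeff d
          (PnAux.Qpoly n - (-(2 * (n : ℤ))) • MvPolynomial.X j0) = 0 := by
        rw [hdsingle, MvPolynomial.coeff_sub, MvPolynomial.coeff_smul, PnAux.lin_coeff n hn,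
          MvPolynomial.coeff_X]
        simp [hj0]
      exact (MvPolynomial.mem_support_iff.1 hd) hzero
    · rw [add_sub_cancel]
  · intro c U hU0 hcomp
    have hcompsum : ∀ m : ℕ, ∑ k ∈ Finset.range (m + 1),
        (if k = 0 then 0 else if k = 1 then 1 else c (k - 1)) * PowerSeries.coeff m (U ^ k)
          = PowerSeries.coeff m (PowerSeries.X : PowerSeries ℂ) := by
      intro m
      have hc := congrArg (PowerSeries.coeff m) hcomp
      rw [psComp, PowerSeries.coeff_mk] at hc
      rw [← hc]
      refine Finset.sum_congr rfl fun k _ => ?_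
      rw [uSeries, PowerSeries.coeff_mk]
    have h1 : PowerSeries.coeff 1 U = 1 := by
      have hspec := PnAux.Ucoef_spec n c U hU0 hcompsum 1 (by omega)
      rw [PnAux.Ucoef_one, map_one] at hspec
      exact hspec
    rw [PnAux.presA n U hU0 h1]
    exact PnAux.main_eval n c U hU0 hcompsum

end
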